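/- Let (Ω, 𝒜) be a measurable space and let K : Ω → 𝒦′(ℂⁿ) be a random compact set. Then the polynomially convex hull of K is a random compact set: there exists a measurable map H : Ω → 𝒦′(ℂⁿ) such that for every ω ∈ Ω the set H(ω) equals the polynomially convex hull K̂(ω) of K(ω). -/

import Mathlib

open TopologicalSpace MvPolynomial Metric Set Filter

namespace PolyHullAux

variable {n : ℕ}

/-- Sup of `‖eval · p‖` over a nonempty compact set. -/
noncomputable def M (p : MvPolynomial (Fin n) ℂ) (L : NonemptyCompacts (Fin n → ℂ)) : ℝ :=
  ⨆ x : (L : Set (Fin n → ℂ)), ‖eval (x : Fin n → ℂ) p‖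

lemma bddAbove_M (p : MvPolynomial (Fin n) ℂ) (L : NonemptyCompacts (Fin n → ℂ)) :
    BddAbove (Set.range fun x : (L : Set (Fin n → ℂ)) => ‖eval (x : Fin n → ℂ) p‖) := by
  have h := L.isCompact.bddAbove_image ((MvPolynomial.continuous_eval p).norm).continuousOn
  rwa [Set.image_eq_range] at h

lemma le_M {p : MvPolynomial (Fin n) ℂ} {L : NonemptyCompacts (Fin n → ℂ)}
    {x : Fin n → ℂ} (hx : x ∈ (L : Set (Fin n → ℂ))) : ‖eval x p‖ ≤ M p L :=
  le_ciSup (bddAbove_M p L) ⟨x, hx⟩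

lemma M_le {p : MvPolynomial (Fin n) ℂ} {L : NonemptyCompacts (Fin n → ℂ)} {c : ℝ}
    (h : ∀ x ∈ (L : Set (Fin n → ℂ)), ‖eval x p‖ ≤ c) : M p L ≤ c := by
  haveI : Nonempty (L : Set (Fin n → ℂ)) := L.nonempty.to_subtype
  exact ciSup_le fun x => h x x.2

lemma continuous_M (p : MvPolynomial (Fin n) ℂ) :
    Continuous fun L : NonemptyCompacts (Fin n → ℂ) => M p L := by
  rw [Metric.continuous_iff]
  intro L₀ ε hε
  set f : (Fin n → ℂ) → ℝ := fun w => ‖eval w p‖ with hf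
  set C : Set (Fin n → ℂ) := cthickening 1 (L₀ : Set (Fin n → ℂ)) with hCdef
  have hC : IsCompact C := L₀.isCompact.cthickening
  have huc : UniformContinuousOn f C :=
    hC.uniformContinuousOn_of_continuous ((MvPolynomial.continuous_eval p).norm).continuousOn
  rw [Metric.uniformContinuousOn_iff] at huc
  obtain ⟨δ, hδ, hδ'⟩ := huc (ε / 2) (by linarith)
  refine ⟨min δ 1 / 2, by positivity, fun L hL => ?_⟩
  have hfin : EMetric.hausdorffEdist (L : Set (Fin n → ℂ)) (L₀ : Set (Fin n → ℂ)) ≠ ⊤ :=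
    hausdorffEdist_ne_top_of_nonempty_of_bounded L.nonempty L₀.nonempty
      L.isCompact.isBounded L₀.isCompact.isBounded
  have hfin' : EMetric.hausdorffEdist (L₀ : Set (Fin n → ℂ)) (L : Set (Fin n → ℂ)) ≠ ⊤ := by
    rw [EMetric.hausdorffEdist] at hfin ⊢
    rwa [Metric.hausdorffEDist_comm] at hfin
  have hLd : hausdorffDist (L : Set (Fin n → ℂ)) (L₀ : Set (Fin n → ℂ)) < min δ 1 := by
    rw [NonemptyCompacts.dist_eq] at hL
    exact hL.trans_le (half_le_self (le_min hδ.le zero_le_one))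
  have h1 : M p L ≤ M p L₀ + ε / 2 := by
    refine M_le fun x hx => ?_
    obtain ⟨y, hy, hxy⟩ := exists_dist_lt_of_hausdorffDist_lt hx hLd hfin
    have hxC : x ∈ C := thickening_subset_cthickening 1 _
      (mem_thickening_iff.2 ⟨y, hy, hxy.trans_le (min_le_right _ _)⟩)
    have hyC : y ∈ C := self_subset_cthickening _ hy
    have hd := hδ' x hxC y hyC (hxy.trans_le (min_le_left _ _))
    rw [Real.dist_eq] at hd
    have := abs_lt.1 hd
    have h2 := le_M (p := p) hy
    simp only [hf] at this ⊢
    linarith [this.1, this.2]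
  have h2 : M p L₀ ≤ M p L + ε / 2 := by
    refine M_le fun y hy => ?_
    obtain ⟨x, hx, hxy⟩ := exists_dist_lt_of_hausdorffDist_lt' hy hLd hfin
    have hxC : x ∈ C := thickening_subset_cthickening 1 _
      (mem_thickening_iff.2 ⟨y, hy, hxy.trans_le (min_le_right _ _)⟩)
    have hyC : y ∈ C := self_subset_cthickening _ hy
    have hd := hδ' x hxC y hyC (hxy.trans_le (min_le_left _ _))
    rw [Real.dist_eq] at hd
    have := abs_lt.1 hd
    have h2 := le_M (p := p) hx
    simp only [hf] at this ⊢
    linarith [this.1, this.2]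
  rw [Real.dist_eq]
  have : |M p L - M p L₀| ≤ ε / 2 := abs_sub_le_iff.2 ⟨by linarith, by linarith⟩
  linarith

/-- Decreasing sequences of nonempty compact sets converge, in Hausdorff distance, to their
intersection. -/
lemma tendsto_hausdorffDist_iInter {X : Type*} [MetricSpace X] {A : ℕ → Set X}
    (hA : ∀ k, IsCompact (A k)) (hne : ∀ k, (A k).Nonempty) (hmono : Antitone A) :
    Tendsto (fun k => hausdorffDist (A k) (⋂ i, A i)) atTop (nhds 0) := by
  rw [Metric.tendsto_atTop]
  intro ε hε
  set C := ⋂ i, A i with hC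
  have hsub : ∃ N, A N ⊆ thickening (ε / 2) C := by
    by_contra h
    push_neg at h
    set t : ℕ → Set X := fun N => A N ∩ (thickening (ε / 2) C)ᶜ with ht
    have htne : ∀ N, (t N).Nonempty := by
      intro N
      rcases not_subset.1 (h N) with ⟨x, hx1, hx2⟩
      exact ⟨x, hx1, hx2⟩
    have hint : (⋂ N, t N).Nonempty := by
      refine IsCompact.nonempty_iInter_of_sequence_nonempty_isCompact_isClosed t
        (fun i => inter_subset_inter_left _ (hmono (Nat.le_succ i))) htne
        ((hA 0).inter_right isOpen_thickening.isClosed_compl)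
        (fun i => ((hA i).isClosed).inter isOpen_thickening.isClosed_compl)
    obtain ⟨x, hx⟩ := hint
    simp only [ht, mem_iInter, mem_inter_iff, mem_compl_iff] at hx
    have hx1 : x ∈ C := mem_iInter.2 fun i => (hx i).1
    exact (hx 0).2 (self_subset_thickening (half_pos hε) _ hx1)
  obtain ⟨N, hN⟩ := hsub
  refine ⟨N, fun k hk => ?_⟩
  have hCne : C.Nonempty :=
    IsCompact.nonempty_iInter_of_sequence_nonempty_isCompact_isClosed A
      (fun i => hmono (Nat.le_succ i)) hne (hA 0) (fun i => (hA i).isClosed)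
  have hle : hausdorffDist (A k) C ≤ ε / 2 := by
    refine hausdorffDist_le_of_mem_dist (half_pos hε).le (fun x hx => ?_) (fun y hy => ?_)
    · have hxT : x ∈ thickening (ε / 2) C := hN (hmono hk hx)
      obtain ⟨y, hy, hxy⟩ := mem_thickening_iff.1 hxT
      exact ⟨y, hy, hxy.le⟩
    · exact ⟨y, iInter_subset A k hy, by simpa using (half_pos hε).le⟩
  have h0 : (0 : ℝ) ≤ hausdorffDist (A k) C := hausdorffDist_nonneg
  rw [Real.dist_eq]
  rw [abs_of_nonneg (by simpa using h0)]
  · linarith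

/-- If `A ⊆ B ⊆ C`, the Hausdorff distance from `B` to `A` is at most that from `C` to `A`. -/
lemma hausdorffDist_le_of_subset_subset {X : Type*} [MetricSpace X] {A B C : Set X}
    (hAB : A ⊆ B) (hBC : B ⊆ C) (hA : A.Nonempty) (hC : Bornology.IsBounded C) :
    hausdorffDist B A ≤ hausdorffDist C A := by
  have hfin : EMetric.hausdorffEdist C A ≠ ⊤ :=
    hausdorffEdist_ne_top_of_nonempty_of_bounded (hA.mono (hAB.trans hBC)) hA hC
      (hC.subset (hAB.trans hBC))
  refine hausdorffDist_le_of_infDist hausdorffDist_nonneg (fun x hx => ?_) (fun y hy => ?_)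
  · exact infDist_le_hausdorffDist_of_mem (hBC hx) hfin
  · rw [infDist_zero_of_mem (hAB hy)]
    exact hausdorffDist_nonneg

/-- Polynomials with Gaussian-rational coefficients, parametrized by pairs of rational
polynomials (real and imaginary parts). -/
noncomputable def toC (q : MvPolynomial (Fin n) ℚ × MvPolynomial (Fin n) ℚ) :
    MvPolynomial (Fin n) ℂ :=
  map (algebraMap ℚ ℂ) q.1 + C Complex.I * map (algebraMap ℚ ℂ) q.2

lemma exists_approx (p : MvPolynomial (Fin n) ℂ) {ε R : ℝ} (hε : 0 < ε) (hR : 0 ≤ R) :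
    ∃ q : MvPolynomial (Fin n) ℚ × MvPolynomial (Fin n) ℚ,
      ∀ w : Fin n → ℂ, (∀ i, ‖w i‖ ≤ R) → ‖eval w p - eval w (toC q)‖ ≤ ε := by
  classical
  set s := p.support with hs
  set Mb : ℝ := (R + 1) ^ p.totalDegree with hMb
  have hMb1 : (1 : ℝ) ≤ Mb := one_le_pow₀ (by linarith)
  set δ : ℝ := ε / (s.card + 1) / Mb with hδdef
  have hδ : 0 < δ := by
    apply div_pos (div_pos hε (by positivity)) (by linarith)
  choose a ha using fun d : Fin n →₀ ℕ => exists_rat_near ((p.coeff d).re) (half_pos hδ)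
  choose b hb using fun d : Fin n →₀ ℕ => exists_rat_near ((p.coeff d).im) (half_pos hδ)
  refine ⟨(∑ d ∈ s, monomial d (a d), ∑ d ∈ s, monomial d (b d)), fun w hw => ?_⟩
  have hbound : ∀ d ∈ s, ‖(d.prod fun i k => w i ^ k)‖ ≤ Mb := by
    intro d hd
    calc ‖(d.prod fun i k => w i ^ k)‖ = ∏ i ∈ d.support, ‖w i‖ ^ d i := by
          rw [Finsupp.prod, norm_prod]
          exact Finset.prod_congr rfl fun i _ => norm_pow _ _
    _ ≤ ∏ i ∈ d.support, (R + 1) ^ d i := by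
          refine Finset.prod_le_prod (fun i _ => by positivity) fun i _ => ?_
          exact pow_le_pow_left₀ (norm_nonneg _) (by linarith [hw i]) _
    _ = (R + 1) ^ (∑ i ∈ d.support, d i) := by rw [Finset.prod_pow_eq_pow_sum]
    _ ≤ Mb := pow_le_pow_right₀ (by linarith) (MvPolynomial.le_totalDegree hd)
  have hcoef : ∀ d, ‖p.coeff d - ((a d : ℂ) + Complex.I * (b d : ℂ))‖ ≤ δ := by
    intro d
    have h1 : (p.coeff d - ((a d : ℂ) + Complex.I * (b d : ℂ))).re = (p.coeff d).re - a d := by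
      simp [Complex.sub_re, Complex.add_re, Complex.mul_re]
    have h2 : (p.coeff d - ((a d : ℂ) + Complex.I * (b d : ℂ))).im = (p.coeff d).im - b d := by
      simp [Complex.sub_im, Complex.add_im, Complex.mul_im]
    calc ‖p.coeff d - ((a d : ℂ) + Complex.I * (b d : ℂ))‖
        ≤ |(p.coeff d - ((a d : ℂ) + Complex.I * (b d : ℂ))).re| +
          |(p.coeff d - ((a d : ℂ) + Complex.I * (b d : ℂ))).im| := by
          exact Complex.norm_le_abs_re_add_abs_im _
    _ ≤ δ / 2 + δ / 2 := by
          rw [h1, h2]; exact add_le_add (ha d).le (hb d).le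
    _ = δ := by ring
  have heval : eval w (toC (∑ d ∈ s, monomial d (a d), ∑ d ∈ s, monomial d (b d)))
      = ∑ d ∈ s, ((a d : ℂ) + Complex.I * (b d : ℂ)) * (d.prod fun i k => w i ^ k) := by
    simp only [toC, map_sum, map_monomial, map_add, map_mul, eval_C, eval_monomial,
      eval_add, eval_mul]
    rw [Finset.mul_sum, ← Finset.sum_add_distrib]
    refine Finset.sum_congr rfl fun d _ => ?_
    rw [eq_ratCast (algebraMap ℚ ℂ) (a d), eq_ratCast (algebraMap ℚ ℂ) (b d)]
    ring
  have hevalp : eval w p = ∑ d ∈ s, p.coeff d * (d.prod fun i k => w i ^ k) := by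
    rw [MvPolynomial.eval_eq]
    exact Finset.sum_congr rfl fun d _ => by rw [Finsupp.prod]
  rw [heval, hevalp, ← Finset.sum_sub_distrib]
  calc ‖∑ d ∈ s, (p.coeff d * (d.prod fun i k => w i ^ k)
          - ((a d : ℂ) + Complex.I * (b d : ℂ)) * (d.prod fun i k => w i ^ k))‖
      ≤ ∑ d ∈ s, ‖(p.coeff d - ((a d : ℂ) + Complex.I * (b d : ℂ)))
          * (d.prod fun i k => w i ^ k)‖ := by
        refine (norm_sum_le _ _).trans_eq ?_
        exact Finset.sum_congr rfl fun d _ => by rw [← sub_mul]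
  _ ≤ ∑ d ∈ s, δ * Mb := by
        refine Finset.sum_le_sum fun d hd => ?_
        rw [norm_mul]
        exact mul_le_mul (hcoef d) (hbound d hd) (norm_nonneg _) hδ.le
  _ = s.card * (δ * Mb) := by rw [Finset.sum_const, nsmul_eq_mul]
  _ ≤ ε := by
        rw [hδdef, div_mul_cancel₀ _ (by linarith : Mb ≠ 0)]
        rw [← mul_div_assoc, div_le_iff₀ (by positivity : (0:ℝ) < (s.card : ℝ) + 1)]
        nlinarith [Nat.cast_nonneg (α := ℝ) s.card, hε.le]

/-- Compact constraint sets used to approximate the polynomial hull. -/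
def PS (q : ℕ → MvPolynomial (Fin n) ℂ) (k : ℕ) (a : Fin n → ℝ) (b : ℕ → ℝ) :
    Set (Fin n → ℂ) :=
  {w | (∀ i, ‖w i‖ ≤ a i) ∧ ∀ j < k, ‖eval w (q j)‖ ≤ b j}

lemma PS_mono {q : ℕ → MvPolynomial (Fin n) ℂ} {k k' : ℕ} {a a' : Fin n → ℝ} {b b' : ℕ → ℝ}
    (hk : k' ≤ k) (ha : ∀ i, a i ≤ a' i) (hb : ∀ j < k', b j ≤ b' j) :
    PS q k a b ⊆ PS q k' a' b' := fun w hw =>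
  ⟨fun i => (hw.1 i).trans (ha i),
    fun j hj => (hw.2 j (lt_of_lt_of_le hj hk)).trans (hb j hj)⟩

lemma PS_congr {q : ℕ → MvPolynomial (Fin n) ℂ} {k : ℕ} {a : Fin n → ℝ} {b b' : ℕ → ℝ}
    (h : ∀ j < k, b j = b' j) : PS q k a b = PS q k a b' := by
  ext w
  exact and_congr_right fun _ => forall₂_congr fun j hj => by rw [h j hj]

lemma isClosed_PS (q : ℕ → MvPolynomial (Fin n) ℂ) (k : ℕ) (a : Fin n → ℝ) (b : ℕ → ℝ) :
    IsClosed (PS q k a b) := by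
  have h : PS q k a b = (⋂ i, {w : Fin n → ℂ | ‖w i‖ ≤ a i}) ∩
      ⋂ j, ⋂ _ : j < k, {w : Fin n → ℂ | ‖eval w (q j)‖ ≤ b j} := by
    ext w
    simp only [PS, mem_setOf_eq, mem_inter_iff, mem_iInter]
  rw [h]
  exact (isClosed_iInter fun i => isClosed_le ((continuous_apply i).norm) continuous_const).inter
    (isClosed_iInter fun j => isClosed_iInter fun _ =>
      isClosed_le ((MvPolynomial.continuous_eval (q j)).norm) continuous_const)

lemma isCompact_PS (q : ℕ → MvPolynomial (Fin n) ℂ) (k : ℕ) (a : Fin n → ℝ) (b : ℕ → ℝ) :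
    IsCompact (PS q k a b) := by
  refine Metric.isCompact_of_isClosed_isBounded (isClosed_PS q k a b) ?_
  refine (Metric.isBounded_closedBall (x := (0 : Fin n → ℂ)) (r := ∑ i, |a i|)).subset ?_
  intro w hw
  rw [mem_closedBall, dist_pi_le_iff (by positivity)]
  intro i
  rw [show (0 : Fin n → ℂ) i = 0 from rfl, dist_zero_right]
  exact (hw.1 i).trans ((le_abs_self _).trans
    (Finset.single_le_sum (f := fun i => |a i|) (fun i _ => abs_nonneg _) (Finset.mem_univ i)))

end PolyHullAux

open PolyHullAux

/-- Theorem `P-hull measurable` of the paper. Let `(Ω, 𝒜)` be a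
measurable space and `K : Ω → 𝒦′(ℂⁿ)` a random compact set (a measurable map into the
nonempty compact subsets of `ℂⁿ` with the Hausdorff distance and its Borel σ-algebra).
Then the polynomially convex hull of `K` is a random compact set: there is a measurable
`H : Ω → 𝒦′(ℂⁿ)` with `H ω` equal, as a set, to the polynomially convex hull
`K̂(ω) = { z : |p z| ≤ sup_{x ∈ K ω} |p x| for every polynomial p }` for every `ω`. -/
theorem polyHull_random_compact
    {Ω : Type*} [MeasurableSpace Ω] {n : ℕ}
    [MeasurableSpace (NonemptyCompacts (Fin n → ℂ))]
    [BorelSpace (NonemptyCompacts (Fin n → ℂ))]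
    (K : Ω → NonemptyCompacts (Fin n → ℂ)) (hK : Measurable K) :
    ∃ H : Ω → NonemptyCompacts (Fin n → ℂ), Measurable H ∧
      ∀ ω : Ω, (H ω : Set (Fin n → ℂ)) =
        {z : Fin n → ℂ | ∀ p : MvPolynomial (Fin n) ℂ,
          ‖eval z p‖ ≤ ⨆ x : (K ω : Set (Fin n → ℂ)), ‖eval (x : Fin n → ℂ) p‖} := by
  classical
  haveI : Countable (MvPolynomial (Fin n) ℚ) :=
    Function.Injective.countable (f := fun p : MvPolynomial (Fin n) ℚ => AddMonoidAlgebra.coeff p)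
      (fun a b h => by cases a; cases b; cases h; rfl)
  obtain ⟨e, he⟩ := exists_surjective_nat (MvPolynomial (Fin n) ℚ × MvPolynomial (Fin n) ℚ)
  set qp : ℕ → MvPolynomial (Fin n) ℂ := fun j => toC (e j) with hqp
  set mX : Fin n → Ω → ℝ := fun i ω => M (X i) (K ω) with hmX
  set mQ : ℕ → Ω → ℝ := fun j ω => M (qp j) (K ω) with hmQ
  have hmXm : ∀ i, Measurable (mX i) := fun i => (continuous_M (X i)).measurable.comp hK
  have hmQm : ∀ j, Measurable (mQ j) := fun j => (continuous_M (qp j)).measurable.comp hK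
  set sl : ℕ → ℝ := fun k => 1 / ((k : ℝ) + 1) with hsl
  have hsl_pos : ∀ k, 0 < sl k := fun k => by positivity
  have hsl_mono : ∀ {k k' : ℕ}, k ≤ k' → sl k' ≤ sl k := by
    intro k k' h
    apply one_div_le_one_div_of_le (by positivity)
    exact add_le_add_left (Nat.cast_le.2 h) 1
  -- the approximating compact sets
  set A : ℕ → Ω → Set (Fin n → ℂ) := fun k ω =>
    PS qp k (fun i => mX i ω + sl k) (fun j => mQ j ω + sl k) with hA
  have hnormX : ∀ (x : Fin n → ℂ) (i : Fin n),
      ‖x i‖ = ‖eval x (X i : MvPolynomial (Fin n) ℂ)‖ := by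
    intro x i; rw [eval_X]
  have hKsub : ∀ (ω : Ω) (k : ℕ) (a : Fin n → ℝ) (b : ℕ → ℝ),
      (∀ i, mX i ω ≤ a i) → (∀ j, j < k → mQ j ω ≤ b j) →
      (K ω : Set (Fin n → ℂ)) ⊆ PS qp k a b := by
    intro ω k a b hax hbx x hx
    refine ⟨fun i => ?_, fun j hj => (le_M hx).trans (hbx j hj)⟩
    rw [hnormX x i]
    exact (le_M hx).trans (hax i)
  have hAcomp : ∀ k ω, IsCompact (A k ω) := fun k ω => isCompact_PS _ _ _ _
  have hAne : ∀ k ω, (A k ω).Nonempty := fun k ω =>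
    (K ω).nonempty.mono (hKsub ω k _ _ (fun i => by linarith [hsl_pos k])
      (fun j _ => by linarith [hsl_pos k]))
  have hAanti : ∀ ω, Antitone fun k => A k ω := fun ω =>
    antitone_nat_of_succ_le fun k => PS_mono (Nat.le_succ k)
      (fun i => add_le_add_right (hsl_mono (Nat.le_succ k)) _)
      (fun j _ => add_le_add_right (hsl_mono (Nat.le_succ k)) _)
  -- the polynomial hull
  set HS : Ω → Set (Fin n → ℂ) := fun ω =>
    {z | ∀ p : MvPolynomial (Fin n) ℂ, ‖eval z p‖ ≤ M p (K ω)} with hHS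
  have hHull : ∀ ω, (⋂ k, A k ω) = HS ω := by
    intro ω
    apply Set.Subset.antisymm
    · intro z hz
      rw [Set.mem_iInter] at hz
      have hXz : ∀ i, ‖z i‖ ≤ mX i ω := by
        intro i
        refine le_of_forall_pos_le_add fun ε hε => ?_
        obtain ⟨k, hk⟩ := exists_nat_one_div_lt hε
        have h1 : ‖z i‖ ≤ mX i ω + sl k := (hz k).1 i
        have hkε : sl k ≤ ε := le_of_lt hk
        linarith
      have hQz : ∀ j, ‖eval z (qp j)‖ ≤ mQ j ω := by
        intro j
        refine le_of_forall_pos_le_add fun ε hε => ?_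
        obtain ⟨k, hk⟩ := exists_nat_one_div_lt hε
        have hjk : j < max k (j + 1) := lt_of_lt_of_le (Nat.lt_succ_self j)
          (le_max_right _ _)
        have h1 : ‖eval z (qp j)‖ ≤ mQ j ω + sl (max k (j + 1)) :=
          (hz (max k (j + 1))).2 j hjk
        have hkε : sl (max k (j + 1)) ≤ sl k := hsl_mono (le_max_left _ _)
        have hkε2 : sl k ≤ ε := le_of_lt hk
        linarith
      intro p
      refine le_of_forall_pos_le_add fun ε hε => ?_
      set R : ℝ := ∑ i, |mX i ω| with hR
      have hR0 : (0 : ℝ) ≤ R := Finset.sum_nonneg fun i _ => abs_nonneg _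
      have hRb : ∀ i, mX i ω ≤ R := fun i => (le_abs_self _).trans
        (Finset.single_le_sum (f := fun i => |mX i ω|) (fun i _ => abs_nonneg _)
          (Finset.mem_univ i))
      have hzR : ∀ i, ‖z i‖ ≤ R := fun i => (hXz i).trans (hRb i)
      have hKR : ∀ x ∈ (K ω : Set (Fin n → ℂ)), ∀ i, ‖x i‖ ≤ R := by
        intro x hx i
        rw [hnormX x i]
        exact (le_M hx).trans (hRb i)
      obtain ⟨q, hq⟩ := exists_approx p (half_pos hε) hR0
      obtain ⟨j, hj⟩ := he q
      have h1 : ‖eval z p‖ ≤ ‖eval z (toC q)‖ + ε / 2 := by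
        have h1a := norm_sub_norm_le (eval z p) (eval z (toC q))
        linarith [hq z hzR]
      have hqj : qp j = toC q := by
        show toC (e j) = toC q
        rw [hj]
      have h2 : ‖eval z (toC q)‖ ≤ mQ j ω := by
        rw [← hqj]
        exact hQz j
      have h3 : mQ j ω ≤ M p (K ω) + ε / 2 := by
        show M (qp j) (K ω) ≤ M p (K ω) + ε / 2
        rw [hqj]
        refine M_le fun x hx => ?_
        have h4 := hq x (hKR x hx)
        have h5 : ‖eval x (toC q)‖ - ‖eval x p‖ ≤ ‖eval x p - eval x (toC q)‖ := by
          rw [norm_sub_rev]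
          exact norm_sub_norm_le _ _
        linarith [le_M (p := p) hx]
      linarith
    · intro z hz
      rw [Set.mem_iInter]
      intro k
      refine ⟨fun i => ?_, fun j _ => by
        show ‖eval z (qp j)‖ ≤ mQ j ω + sl k
        have h1 : ‖eval z (qp j)‖ ≤ mQ j ω := hz (qp j)
        linarith [hsl_pos k]⟩
      show ‖z i‖ ≤ mX i ω + sl k
      rw [hnormX z i]
      have h1 : ‖eval z (X i : MvPolynomial (Fin n) ℂ)‖ ≤ mX i ω := hz (X i)
      linarith [hsl_pos k]
  have hHSsub : ∀ ω, (K ω : Set (Fin n → ℂ)) ⊆ HS ω := fun ω x hx p => le_M hx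
  have hHScomp : ∀ ω, IsCompact (HS ω) := by
    intro ω
    rw [← hHull ω]
    exact (hAcomp 0 ω).of_isClosed_subset
      (isClosed_iInter fun k => (hAcomp k ω).isClosed) (Set.iInter_subset _ 0)
  -- bundled versions
  set A' : ℕ → Ω → NonemptyCompacts (Fin n → ℂ) := fun k ω =>
    ⟨⟨A k ω, hAcomp k ω⟩, hAne k ω⟩ with hA'
  set cap : ℕ → ℝ → ℝ := fun m t => (⌈((m : ℝ) + 1) * t⌉ : ℤ) / ((m : ℝ) + 1) with hcap
  have hcap_ge : ∀ m t, t ≤ cap m t := by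
    intro m t
    rw [le_div_iff₀ (by positivity : (0:ℝ) < (m : ℝ) + 1)]
    calc t * ((m : ℝ) + 1) = ((m : ℝ) + 1) * t := by ring
    _ ≤ ⌈((m : ℝ) + 1) * t⌉ := Int.le_ceil _
  have hcap_le : ∀ m t, cap m t ≤ t + sl m := by
    intro m t
    show (⌈((m : ℝ) + 1) * t⌉ : ℝ) / ((m : ℝ) + 1) ≤ t + 1 / ((m : ℝ) + 1)
    rw [div_le_iff₀ (by positivity : (0:ℝ) < (m : ℝ) + 1)]
    have h1 : (⌈((m : ℝ) + 1) * t⌉ : ℝ) < ((m : ℝ) + 1) * t + 1 := Int.ceil_lt_add_one _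
    have h2 : (t + 1 / ((m : ℝ) + 1)) * ((m : ℝ) + 1) = ((m : ℝ) + 1) * t + 1 := by
      field_simp
    linarith
  set G : ℕ → ℕ → Ω → Set (Fin n → ℂ) := fun k m ω =>
    PS qp k (fun i => cap m (mX i ω) + sl k) (fun j => cap m (mQ j ω) + sl k) with hG
  have hGne : ∀ k m ω, (G k m ω).Nonempty := fun k m ω =>
    (K ω).nonempty.mono (hKsub ω k _ _
      (fun i => by linarith [hcap_ge m (mX i ω), hsl_pos k])
      (fun j _ => by linarith [hcap_ge m (mQ j ω), hsl_pos k]))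
  set G' : ℕ → ℕ → Ω → NonemptyCompacts (Fin n → ℂ) := fun k m ω =>
    ⟨⟨G k m ω, isCompact_PS _ _ _ _⟩, hGne k m ω⟩ with hG'
  have hGmeas : ∀ k m, Measurable (G' k m) := by
    intro k m
    set g : Ω → (Fin n → ℤ) × (Fin k → ℤ) := fun ω =>
      (fun i => ⌈((m : ℝ) + 1) * mX i ω⌉, fun j => ⌈((m : ℝ) + 1) * mQ j ω⌉) with hg
    have hgm : Measurable g := by
      refine Measurable.prod ?_ ?_
      · exact measurable_pi_lambda _ fun i => Measurable.ceil ((hmXm i).const_mul _)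
      · exact measurable_pi_lambda _ fun j => Measurable.ceil ((hmQm j).const_mul _)
    set h : (Fin n → ℤ) × (Fin k → ℤ) → NonemptyCompacts (Fin n → ℂ) := fun v =>
      if hne : (PS qp k (fun i => (v.1 i : ℝ) / ((m : ℝ) + 1) + sl k)
          (fun j => if hj : j < k then (v.2 ⟨j, hj⟩ : ℝ) / ((m : ℝ) + 1) + sl k
            else 0)).Nonempty
      then ⟨⟨_, isCompact_PS _ _ _ _⟩, hne⟩
      else ⟨⟨{0}, isCompact_singleton⟩, Set.singleton_nonempty 0⟩ with hh
    have hcomp : G' k m = h ∘ g := by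
      funext ω
      have hseteq : PS qp k (fun i => ((g ω).1 i : ℝ) / ((m : ℝ) + 1) + sl k)
          (fun j => if hj : j < k then ((g ω).2 ⟨j, hj⟩ : ℝ) / ((m : ℝ) + 1) + sl k
            else 0) = G k m ω := by
        have h1 : PS qp k (fun i => ((g ω).1 i : ℝ) / ((m : ℝ) + 1) + sl k)
            (fun j => if hj : j < k then ((g ω).2 ⟨j, hj⟩ : ℝ) / ((m : ℝ) + 1) + sl k
              else 0)
            = PS qp k (fun i => ((g ω).1 i : ℝ) / ((m : ℝ) + 1) + sl k)
            (fun j => cap m (mQ j ω) + sl k) :=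
          PS_congr fun j hj => by rw [dif_pos hj]
        rw [h1]
      show G' k m ω = h (g ω)
      rw [hh]
      simp only [hseteq]
      rw [dif_pos (hGne k m ω)]
    rw [hcomp]
    exact (measurable_of_countable h).comp hgm
  have hAmeas : ∀ k, Measurable (A' k) := by
    intro k
    refine measurable_of_tendsto_metrizable (fun m => hGmeas k m) ?_
    rw [tendsto_pi_nhds]
    intro ω
    rw [tendsto_iff_dist_tendsto_zero]
    set B : ℕ → Set (Fin n → ℂ) := fun m =>
      PS qp k (fun i => mX i ω + sl k + sl m) (fun j => mQ j ω + sl k + sl m) with hB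
    have hAG : ∀ m, A k ω ⊆ G k m ω := fun m => PS_mono le_rfl
      (fun i => add_le_add_left (hcap_ge m _) _)
      (fun j _ => add_le_add_left (hcap_ge m _) _)
    have hGB : ∀ m, G k m ω ⊆ B m := fun m => PS_mono le_rfl
      (fun i => by linarith [hcap_le m (mX i ω)])
      (fun j _ => by linarith [hcap_le m (mQ j ω)])
    have hBanti : Antitone B := antitone_nat_of_succ_le fun m => PS_mono le_rfl
      (fun i => by linarith [hsl_mono (Nat.le_succ m)])
      (fun j _ => by linarith [hsl_mono (Nat.le_succ m)])
    have hBne : ∀ m, (B m).Nonempty := fun m =>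
      (K ω).nonempty.mono (hKsub ω k _ _
        (fun i => by linarith [hsl_pos k, hsl_pos m])
        (fun j _ => by linarith [hsl_pos k, hsl_pos m]))
    have hBiInter : (⋂ m, B m) = A k ω := by
      apply Set.Subset.antisymm
      · intro w hw
        rw [Set.mem_iInter] at hw
        refine ⟨fun i => ?_, fun j hj => ?_⟩
        · show ‖w i‖ ≤ mX i ω + sl k
          refine le_of_forall_pos_le_add fun ε hε => ?_
          obtain ⟨m, hm⟩ := exists_nat_one_div_lt hε
          have h1 : ‖w i‖ ≤ mX i ω + sl k + sl m := (hw m).1 i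
          have h2 : sl m ≤ ε := le_of_lt hm
          linarith
        · show ‖eval w (qp j)‖ ≤ mQ j ω + sl k
          refine le_of_forall_pos_le_add fun ε hε => ?_
          obtain ⟨m, hm⟩ := exists_nat_one_div_lt hε
          have h1 : ‖eval w (qp j)‖ ≤ mQ j ω + sl k + sl m := (hw m).2 j hj
          have h2 : sl m ≤ ε := le_of_lt hm
          linarith
      · intro w hw
        rw [Set.mem_iInter]
        intro m
        refine ⟨fun i => ?_, fun j hj => ?_⟩
        · show ‖w i‖ ≤ mX i ω + sl k + sl m
          have h1 : ‖w i‖ ≤ mX i ω + sl k := hw.1 i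
          linarith [hsl_pos m]
        · show ‖eval w (qp j)‖ ≤ mQ j ω + sl k + sl m
          have h1 : ‖eval w (qp j)‖ ≤ mQ j ω + sl k := hw.2 j hj
          linarith [hsl_pos m]
    have hdist : ∀ m, dist (G' k m ω) (A' k ω) ≤ hausdorffDist (B m) (A k ω) := by
      intro m
      rw [NonemptyCompacts.dist_eq]
      exact hausdorffDist_le_of_subset_subset (hAG m) (hGB m) (hAne k ω)
        (isCompact_PS _ _ _ _).isBounded
    have hlim : Tendsto (fun m => hausdorffDist (B m) (A k ω)) atTop (nhds 0) := by
      have ht := tendsto_hausdorffDist_iInter (fun m => isCompact_PS qp k _ _) hBne hBanti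
      rwa [hBiInter] at ht
    exact squeeze_zero (fun m => dist_nonneg) hdist hlim
  refine ⟨fun ω => ⟨⟨HS ω, hHScomp ω⟩, (K ω).nonempty.mono (hHSsub ω)⟩, ?_, fun ω => rfl⟩
  refine measurable_of_tendsto_metrizable hAmeas ?_
  rw [tendsto_pi_nhds]
  intro ω
  rw [tendsto_iff_dist_tendsto_zero]
  have ht := tendsto_hausdorffDist_iInter (fun k => hAcomp k ω) (fun k => hAne k ω) (hAanti ω)
  rw [hHull ω] at ht
  have hdeq : ∀ k, dist (A' k ω)
      (⟨⟨HS ω, hHScomp ω⟩, (K ω).nonempty.mono (hHSsub ω)⟩ : NonemptyCompacts (Fin n → ℂ))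
      = hausdorffDist (A k ω) (HS ω) := fun k => NonemptyCompacts.dist_eq
  simpa only [hdeq] using ht
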